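/- Let q ≥ 4 be a power of 2 and F = 𝔽_q the field with q elements. Let Z denote the additive group of symmetric 3×3 matrices over F, on which SL_3(F) acts by X · C = X C Xᵀ, and let R ≤ Z be the subgroup of symmetric 3×3 matrices over F all of whose diagonal entries are zero. If D is an additive subgroup of Z such that X C Xᵀ ∈ D for every C ∈ D and every X ∈ SL_3(F), and D ≠ 0 and D ≠ Z, then D = R. -/

import Mathlib

open Matrix

/-- The additive group of symmetric `3 × 3` matrices over `F`. -/
def symmMatrices (F : Type*) [Field F] : AddSubgroup (Matrix (Fin 3) (Fin 3) F) where
  carrier := {C | Cᵀ = C}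
  add_mem' := by
    intro a b ha hb
    simp only [Set.mem_setOf_eq, Matrix.transpose_add] at *
    rw [ha, hb]
  zero_mem' := by simp
  neg_mem' := by
    intro a ha
    simp only [Set.mem_setOf_eq, Matrix.transpose_neg] at *
    rw [ha]

/-- The additive group of symmetric `3 × 3` matrices over `F` with zero diagonal. -/
def symmMatricesZeroDiag (F : Type*) [Field F] : AddSubgroup (Matrix (Fin 3) (Fin 3) F) where
  carrier := {C | Cᵀ = C ∧ ∀ i, C i i = 0}
  add_mem' := by
    rintro a b ⟨ha, ha'⟩ ⟨hb, hb'⟩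
    constructor
    · rw [Matrix.transpose_add, ha, hb]
    · intro i
      simp [Matrix.add_apply, ha' i, hb' i]
  zero_mem' := by simp
  neg_mem' := by
    rintro a ⟨ha, ha'⟩
    constructor
    · rw [Matrix.transpose_neg, ha]
    · intro i
      simp [Matrix.neg_apply, ha' i]

namespace Stmt13Aux

variable {F : Type*} [Field F]

lemma conjMem {D : AddSubgroup (Matrix (Fin 3) (Fin 3) F)}
    (hinv : ∀ C ∈ D, ∀ X : Matrix.SpecialLinearGroup (Fin 3) F,
      (X : Matrix (Fin 3) (Fin 3) F) * C * (X : Matrix (Fin 3) (Fin 3) F)ᵀ ∈ D)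
    {C M : Matrix (Fin 3) (Fin 3) F} (hC : C ∈ D) (hM : M.det = 1) :
    M * C * Mᵀ ∈ D :=
  hinv C hC ⟨M, hM⟩

lemma detT10 (t : F) : (!![1,0,0;t,1,0;0,0,1] : Matrix (Fin 3) (Fin 3) F).det = 1 := by
  simp [Matrix.det_fin_three]

lemma detT01 (t : F) : (!![1,t,0;0,1,0;0,0,1] : Matrix (Fin 3) (Fin 3) F).det = 1 := by
  simp [Matrix.det_fin_three]

lemma detT20 (t : F) : (!![1,0,0;0,1,0;t,0,1] : Matrix (Fin 3) (Fin 3) F).det = 1 := by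
  simp [Matrix.det_fin_three]

lemma detY1 {v : F} (hv : v ≠ 0) :
    (!![v⁻¹,0,0;0,v*v,0;0,0,v⁻¹] : Matrix (Fin 3) (Fin 3) F).det = 1 := by
  simp [Matrix.det_fin_three]
  field_simp

lemma detY2 {v : F} (hv : v ≠ 0) :
    (!![v*v,0,0;0,v⁻¹,0;0,0,v⁻¹] : Matrix (Fin 3) (Fin 3) F).det = 1 := by
  simp [Matrix.det_fin_three]
  field_simp

lemma detP01 (h2 : (2:F) = 0) : (!![0,1,0;1,0,0;0,0,1] : Matrix (Fin 3) (Fin 3) F).det = 1 := by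
  simp [Matrix.det_fin_three]
  linear_combination -h2

lemma detP02 (h2 : (2:F) = 0) : (!![0,0,1;0,1,0;1,0,0] : Matrix (Fin 3) (Fin 3) F).det = 1 := by
  simp [Matrix.det_fin_three]
  linear_combination -h2

lemma detP12 (h2 : (2:F) = 0) : (!![1,0,0;0,0,1;0,1,0] : Matrix (Fin 3) (Fin 3) F).det = 1 := by
  simp [Matrix.det_fin_three]
  linear_combination -h2

lemma idA1 (h2 : (2:F) = 0) (t : F) (C : Matrix (Fin 3) (Fin 3) F)
    (h10 : C 1 0 = C 0 1) (h20 : C 2 0 = C 0 2) (h21 : C 2 1 = C 1 2) :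
    !![1,0,0;t,1,0;0,0,1] * C * (!![1,0,0;t,1,0;0,0,1])ᵀ + C
      = !![0, t * C 0 0, 0; t * C 0 0, t * t * C 0 0, t * C 0 2; 0, t * C 0 2, 0] := by
  have htwo : ∀ x : F, x * 2 = 0 := fun x => by rw [h2, mul_zero]
  ext i j
  fin_cases i <;> fin_cases j
  all_goals simp only [Matrix.add_apply, Matrix.mul_apply, Matrix.transpose_apply,
    Fin.sum_univ_three]
  all_goals try simp [Matrix.vecHead, Matrix.vecTail, h10, h20, h21]
  all_goals try ring_nf
  all_goals try simp [htwo, h2, Matrix.vecHead, Matrix.vecTail]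

lemma idA2 (h2 : (2:F) = 0) {v : F} (hv : v ≠ 0) (t a c : F) :
    !![v⁻¹,0,0;0,v*v,0;0,0,v⁻¹] * !![0, t*a, 0; t*a, t*t*a, t*c; 0, t*c, 0]
        * (!![v⁻¹,0,0;0,v*v,0;0,0,v⁻¹] : Matrix (Fin 3) (Fin 3) F)ᵀ
      + !![0, (v*t)*a, 0; (v*t)*a, (v*t)*(v*t)*a, (v*t)*c; 0, (v*t)*c, 0]
      = !![0,0,0;0,(v*v*v*v + v*v)*(t*t)*a,0;0,0,0] := by
  have htwo : ∀ x : F, x * 2 = 0 := fun x => by rw [h2, mul_zero]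
  ext i j
  fin_cases i <;> fin_cases j
  all_goals simp only [Matrix.add_apply, Matrix.mul_apply, Matrix.transpose_apply,
    Fin.sum_univ_three]
  all_goals try simp [Matrix.vecHead, Matrix.vecTail]
  all_goals try field_simp
  all_goals try ring_nf
  all_goals try simp [htwo, h2, Matrix.vecHead, Matrix.vecTail]

lemma idB1 (h2 : (2:F) = 0) (t : F) :
    !![1,t,0;0,1,0;0,0,1] * !![0,0,0;0,1,0;0,0,0]
        * (!![1,t,0;0,1,0;0,0,1] : Matrix (Fin 3) (Fin 3) F)ᵀ
      + !![0,0,0;0,1,0;0,0,0] = !![t*t, t, 0; t, 0, 0; 0, 0, 0] := by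
  have htwo : ∀ x : F, x * 2 = 0 := fun x => by rw [h2, mul_zero]
  ext i j
  fin_cases i <;> fin_cases j
  all_goals simp only [Matrix.add_apply, Matrix.mul_apply, Matrix.transpose_apply,
    Fin.sum_univ_three]
  all_goals try simp [Matrix.vecHead, Matrix.vecTail]
  all_goals try ring_nf
  all_goals try simp [htwo, h2, Matrix.vecHead, Matrix.vecTail]

lemma idB2 (h2 : (2:F) = 0) {v : F} (hv : v ≠ 0) (t : F) :
    !![v*v,0,0;0,v⁻¹,0;0,0,v⁻¹] * !![t*t, t, 0; t, 0, 0; 0, 0, 0]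
        * (!![v*v,0,0;0,v⁻¹,0;0,0,v⁻¹] : Matrix (Fin 3) (Fin 3) F)ᵀ
      + !![(v*t)*(v*t), v*t, 0; v*t, 0, 0; 0, 0, 0]
      = !![(v*v*v*v + v*v)*(t*t),0,0;0,0,0;0,0,0] := by
  have htwo : ∀ x : F, x * 2 = 0 := fun x => by rw [h2, mul_zero]
  ext i j
  fin_cases i <;> fin_cases j
  all_goals simp only [Matrix.add_apply, Matrix.mul_apply, Matrix.transpose_apply,
    Fin.sum_univ_three]
  all_goals try simp [Matrix.vecHead, Matrix.vecTail]
  all_goals try field_simp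
  all_goals try ring_nf
  all_goals try simp [htwo, h2, Matrix.vecHead, Matrix.vecTail]

lemma idB3 (h2 : (2:F) = 0) (t : F) :
    (!![t*t, t, 0; t, 0, 0; 0, 0, 0] : Matrix (Fin 3) (Fin 3) F) + !![t*t,0,0;0,0,0;0,0,0]
      = !![0,t,0;t,0,0;0,0,0] := by
  have htwo : ∀ x : F, x * 2 = 0 := fun x => by rw [h2, mul_zero]
  ext i j
  fin_cases i <;> fin_cases j
  all_goals simp only [Matrix.add_apply]
  all_goals try simp [Matrix.vecHead, Matrix.vecTail]
  all_goals try ring_nf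
  all_goals try simp [htwo, h2, Matrix.vecHead, Matrix.vecTail]

lemma idS1 (s : F) : (!![1,0,0;0,0,1;0,1,0] : Matrix (Fin 3) (Fin 3) F) * !![0,0,0;0,s,0;0,0,0]
    * (!![1,0,0;0,0,1;0,1,0] : Matrix (Fin 3) (Fin 3) F)ᵀ = !![0,0,0;0,0,0;0,0,s] := by
  ext i j
  fin_cases i <;> fin_cases j
  all_goals simp only [Matrix.mul_apply, Matrix.transpose_apply, Fin.sum_univ_three]
  all_goals simp [Matrix.vecHead, Matrix.vecTail]

lemma idS2 (s : F) : (!![1,0,0;0,0,1;0,1,0] : Matrix (Fin 3) (Fin 3) F) * !![0,s,0;s,0,0;0,0,0]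
    * (!![1,0,0;0,0,1;0,1,0] : Matrix (Fin 3) (Fin 3) F)ᵀ = !![0,0,s;0,0,0;s,0,0] := by
  ext i j
  fin_cases i <;> fin_cases j
  all_goals simp only [Matrix.mul_apply, Matrix.transpose_apply, Fin.sum_univ_three]
  all_goals simp [Matrix.vecHead, Matrix.vecTail]

lemma idS3 (s : F) : (!![0,1,0;1,0,0;0,0,1] : Matrix (Fin 3) (Fin 3) F) * !![0,0,s;0,0,0;s,0,0]
    * (!![0,1,0;1,0,0;0,0,1] : Matrix (Fin 3) (Fin 3) F)ᵀ = !![0,0,0;0,0,s;0,s,0] := by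
  ext i j
  fin_cases i <;> fin_cases j
  all_goals simp only [Matrix.mul_apply, Matrix.transpose_apply, Fin.sum_univ_three]
  all_goals simp [Matrix.vecHead, Matrix.vecTail]

lemma idS4 (s : F) : (!![0,0,1;0,1,0;1,0,0] : Matrix (Fin 3) (Fin 3) F) * !![0,0,0;0,0,s;0,s,0]
    * (!![0,0,1;0,1,0;1,0,0] : Matrix (Fin 3) (Fin 3) F)ᵀ = !![0,s,0;s,0,0;0,0,0] := by
  ext i j
  fin_cases i <;> fin_cases j
  all_goals simp only [Matrix.mul_apply, Matrix.transpose_apply, Fin.sum_univ_three]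
  all_goals simp [Matrix.vecHead, Matrix.vecTail]

lemma idS5 (s : F) : (!![0,1,0;1,0,0;0,0,1] : Matrix (Fin 3) (Fin 3) F) * !![0,0,0;0,0,s;0,s,0]
    * (!![0,1,0;1,0,0;0,0,1] : Matrix (Fin 3) (Fin 3) F)ᵀ = !![0,0,s;0,0,0;s,0,0] := by
  ext i j
  fin_cases i <;> fin_cases j
  all_goals simp only [Matrix.mul_apply, Matrix.transpose_apply, Fin.sum_univ_three]
  all_goals simp [Matrix.vecHead, Matrix.vecTail]

lemma idP1 (C : Matrix (Fin 3) (Fin 3) F) :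
    ((!![0,1,0;1,0,0;0,0,1] : Matrix (Fin 3) (Fin 3) F) * C
      * (!![0,1,0;1,0,0;0,0,1] : Matrix (Fin 3) (Fin 3) F)ᵀ) 0 0 = C 1 1 := by
  simp only [Matrix.mul_apply, Matrix.transpose_apply, Fin.sum_univ_three]
  simp [Matrix.vecHead, Matrix.vecTail]

lemma idP2 (C : Matrix (Fin 3) (Fin 3) F) :
    ((!![0,0,1;0,1,0;1,0,0] : Matrix (Fin 3) (Fin 3) F) * C
      * (!![0,0,1;0,1,0;1,0,0] : Matrix (Fin 3) (Fin 3) F)ᵀ) 0 0 = C 2 2 := by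
  simp only [Matrix.mul_apply, Matrix.transpose_apply, Fin.sum_univ_three]
  simp [Matrix.vecHead, Matrix.vecTail]

lemma idP3 (C : Matrix (Fin 3) (Fin 3) F) :
    ((!![1,0,0;0,0,1;0,1,0] : Matrix (Fin 3) (Fin 3) F) * C
      * (!![1,0,0;0,0,1;0,1,0] : Matrix (Fin 3) (Fin 3) F)ᵀ) 0 1 = C 0 2 := by
  simp only [Matrix.mul_apply, Matrix.transpose_apply, Fin.sum_univ_three]
  simp [Matrix.vecHead, Matrix.vecTail]

lemma idP4 (C : Matrix (Fin 3) (Fin 3) F) :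
    ((!![0,0,1;0,1,0;1,0,0] : Matrix (Fin 3) (Fin 3) F) * C
      * (!![0,0,1;0,1,0;1,0,0] : Matrix (Fin 3) (Fin 3) F)ᵀ) 0 1 = C 2 1 := by
  simp only [Matrix.mul_apply, Matrix.transpose_apply, Fin.sum_univ_three]
  simp [Matrix.vecHead, Matrix.vecTail]

lemma idE1 (h2 : (2:F) = 0) (t : F) (C : Matrix (Fin 3) (Fin 3) F)
    (h10 : C 1 0 = C 0 1) (h20 : C 2 0 = C 0 2) (h21 : C 2 1 = C 1 2)
    (d0 : C 0 0 = 0) (d1 : C 1 1 = 0) (d2 : C 2 2 = 0) :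
    !![1,0,0;0,1,0;t,0,1] * C * (!![1,0,0;0,1,0;t,0,1])ᵀ + C
      = !![0,0,0;0,0,t * C 0 1;0,t * C 0 1,0] := by
  have htwo : ∀ x : F, x * 2 = 0 := fun x => by rw [h2, mul_zero]
  ext i j
  fin_cases i <;> fin_cases j
  all_goals simp only [Matrix.add_apply, Matrix.mul_apply, Matrix.transpose_apply,
    Fin.sum_univ_three]
  all_goals try simp [Matrix.vecHead, Matrix.vecTail, h10, h20, h21, d0, d1, d2]
  all_goals try ring_nf
  all_goals try simp [htwo, h2, Matrix.vecHead, Matrix.vecTail]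

lemma idD1 (C : Matrix (Fin 3) (Fin 3) F)
    (h10 : C 1 0 = C 0 1) (h20 : C 2 0 = C 0 2) (h21 : C 2 1 = C 1 2) :
    C = !![C 0 0,0,0;0,0,0;0,0,0] + !![0,0,0;0,C 1 1,0;0,0,0] + !![0,0,0;0,0,0;0,0,C 2 2]
      + !![0,C 0 1,0;C 0 1,0,0;0,0,0] + !![0,0,C 0 2;0,0,0;C 0 2,0,0]
      + !![0,0,0;0,0,C 1 2;0,C 1 2,0] := by
  ext i j
  fin_cases i <;> fin_cases j
  all_goals simp only [Matrix.add_apply]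
  all_goals simp [Matrix.vecHead, Matrix.vecTail, h10, h20, h21]

lemma idD2 (C : Matrix (Fin 3) (Fin 3) F)
    (h10 : C 1 0 = C 0 1) (h20 : C 2 0 = C 0 2) (h21 : C 2 1 = C 1 2)
    (d0 : C 0 0 = 0) (d1 : C 1 1 = 0) (d2 : C 2 2 = 0) :
    C = !![0,C 0 1,0;C 0 1,0,0;0,0,0] + !![0,0,C 0 2;0,0,0;C 0 2,0,0]
      + !![0,0,0;0,0,C 1 2;0,C 1 2,0] := by
  ext i j
  fin_cases i <;> fin_cases j
  all_goals simp only [Matrix.add_apply]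
  all_goals simp [Matrix.vecHead, Matrix.vecTail, h10, h20, h21, d0, d1, d2]

section Steps

variable {D : AddSubgroup (Matrix (Fin 3) (Fin 3) F)}

lemma sym10 {C : Matrix (Fin 3) (Fin 3) F} (hsym : Cᵀ = C) : C 1 0 = C 0 1 := by
  simpa using congrFun (congrFun hsym 0) 1

lemma sym20 {C : Matrix (Fin 3) (Fin 3) F} (hsym : Cᵀ = C) : C 2 0 = C 0 2 := by
  simpa using congrFun (congrFun hsym 0) 2

lemma sym21 {C : Matrix (Fin 3) (Fin 3) F} (hsym : Cᵀ = C) : C 2 1 = C 1 2 := by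
  simpa using congrFun (congrFun hsym 1) 2

lemma kappa_ne {v : F} (h2 : (2:F) = 0) (hv : v ≠ 0) (hv1 : v ≠ 1) :
    v*v*v*v + v*v ≠ 0 := by
  intro h
  have h' : (v*v) * (v*v + 1) = 0 := by linear_combination h
  rcases mul_eq_zero.mp h' with h'' | h''
  · exact hv (mul_self_eq_zero.mp h'')
  · apply hv1
    have h3 : (v + 1) * (v + 1) = 0 := by linear_combination h'' + v * h2
    have h4 := mul_self_eq_zero.mp h3
    linear_combination h4 - h2

lemma stepA
    (hinv : ∀ C ∈ D, ∀ X : Matrix.SpecialLinearGroup (Fin 3) F,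
      (X : Matrix (Fin 3) (Fin 3) F) * C * (X : Matrix (Fin 3) (Fin 3) F)ᵀ ∈ D)
    (h2 : (2:F) = 0) (hsq : ∀ s : F, ∃ t : F, t * t = s)
    {v : F} (hv : v ≠ 0) (hv1 : v ≠ 1)
    {C : Matrix (Fin 3) (Fin 3) F} (hC : C ∈ D) (hsym : Cᵀ = C) (ha : C 0 0 ≠ 0) :
    ∀ s : F, !![(0:F),0,0;0,s,0;0,0,0] ∈ D := by
  have h10 := sym10 hsym; have h20 := sym20 hsym; have h21 := sym21 hsym
  have hg : ∀ t : F,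
      !![0, t * C 0 0, 0; t * C 0 0, t*t*C 0 0, t * C 0 2; 0, t * C 0 2, 0] ∈ D := by
    intro t
    have h1 := D.add_mem (conjMem hinv hC (detT10 t)) hC
    rwa [idA1 h2 t C h10 h20 h21] at h1
  have hgY : ∀ t : F,
      !![(0:F),0,0;0,(v*v*v*v + v*v)*(t*t)*(C 0 0),0;0,0,0] ∈ D := by
    intro t
    have h1 := D.add_mem (conjMem hinv (hg t) (detY1 hv)) (hg (v*t))
    rwa [idA2 h2 hv t (C 0 0) (C 0 2)] at h1
  intro s
  have hκ : (v*v*v*v + v*v) * C 0 0 ≠ 0 := mul_ne_zero (kappa_ne h2 hv hv1) ha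
  obtain ⟨t, ht⟩ := hsq (s / ((v*v*v*v + v*v) * C 0 0))
  have he : (v*v*v*v + v*v)*(t*t)*(C 0 0) = s := by
    rw [ht]
    rw [mul_div_assoc', div_mul_eq_mul_div, div_eq_iff hκ]
    ring
  have h1 := hgY t
  rwa [he] at h1

lemma stepB
    (hinv : ∀ C ∈ D, ∀ X : Matrix.SpecialLinearGroup (Fin 3) F,
      (X : Matrix (Fin 3) (Fin 3) F) * C * (X : Matrix (Fin 3) (Fin 3) F)ᵀ ∈ D)
    (h2 : (2:F) = 0) (hsq : ∀ s : F, ∃ t : F, t * t = s)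
    {v : F} (hv : v ≠ 0) (hv1 : v ≠ 1)
    (hE11 : ∀ s : F, !![(0:F),0,0;0,s,0;0,0,0] ∈ D) :
    (∀ s : F, !![s,0,0;0,0,0;0,0,0] ∈ D) ∧ (∀ s : F, !![0,s,0;s,0,0;0,0,0] ∈ D) := by
  have hg : ∀ t : F, (!![t*t, t, 0; t, 0, 0; 0,0,0] : Matrix (Fin 3) (Fin 3) F) ∈ D := by
    intro t
    have h1 := D.add_mem (conjMem hinv (hE11 1) (detT01 t)) (hE11 1)
    rwa [idB1 h2 t] at h1
  have hE00 : ∀ s : F, (!![s,0,0;0,0,0;0,0,0] : Matrix (Fin 3) (Fin 3) F) ∈ D := by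
    intro s
    have hgY : ∀ t : F,
        (!![(v*v*v*v+v*v)*(t*t),0,0;0,0,0;0,0,0] : Matrix (Fin 3) (Fin 3) F) ∈ D := by
      intro t
      have h1 := D.add_mem (conjMem hinv (hg t) (detY2 hv)) (hg (v*t))
      rwa [idB2 h2 hv t] at h1
    have hκ : (v*v*v*v + v*v) ≠ 0 := kappa_ne h2 hv hv1
    obtain ⟨t, ht⟩ := hsq (s / (v*v*v*v + v*v))
    have he : (v*v*v*v + v*v)*(t*t) = s := by
      rw [ht]
      rw [mul_div_assoc', div_eq_iff hκ, mul_comm]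
    have h1 := hgY t
    rwa [he] at h1
  refine ⟨hE00, fun s => ?_⟩
  have h1 := D.add_mem (hg s) (hE00 (s*s))
  rwa [idB3 h2 s] at h1

lemma fullD
    (hinv : ∀ C ∈ D, ∀ X : Matrix.SpecialLinearGroup (Fin 3) F,
      (X : Matrix (Fin 3) (Fin 3) F) * C * (X : Matrix (Fin 3) (Fin 3) F)ᵀ ∈ D)
    (hDZ : D ≤ symmMatrices F)
    (h2 : (2:F) = 0) (hsq : ∀ s : F, ∃ t : F, t * t = s)
    {v : F} (hv : v ≠ 0) (hv1 : v ≠ 1)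
    {C : Matrix (Fin 3) (Fin 3) F} (hC : C ∈ D) (hsym : Cᵀ = C) (ha : C 0 0 ≠ 0) :
    D = symmMatrices F := by
  have hE11 := stepA hinv h2 hsq hv hv1 hC hsym ha
  obtain ⟨hE00, hF01⟩ := stepB hinv h2 hsq hv hv1 hE11
  have hE22 : ∀ s : F, (!![(0:F),0,0;0,0,0;0,0,s] : Matrix (Fin 3) (Fin 3) F) ∈ D := by
    intro s
    have h1 := conjMem hinv (hE11 s) (detP12 h2)
    rwa [idS1 s] at h1
  have hF02 : ∀ s : F, (!![(0:F),0,s;0,0,0;s,0,0] : Matrix (Fin 3) (Fin 3) F) ∈ D := by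
    intro s
    have h1 := conjMem hinv (hF01 s) (detP12 h2)
    rwa [idS2 s] at h1
  have hF12 : ∀ s : F, (!![(0:F),0,0;0,0,s;0,s,0] : Matrix (Fin 3) (Fin 3) F) ∈ D := by
    intro s
    have h1 := conjMem hinv (hF02 s) (detP01 h2)
    rwa [idS3 s] at h1
  refine le_antisymm hDZ ?_
  intro M hM
  have hMsym : Mᵀ = M := hM
  rw [idD1 M (sym10 hMsym) (sym20 hMsym) (sym21 hMsym)]
  exact D.add_mem (D.add_mem (D.add_mem (D.add_mem (D.add_mem (hE00 _) (hE11 _)) (hE22 _))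
    (hF01 _)) (hF02 _)) (hF12 _)

lemma allDiagZero
    (hinv : ∀ C ∈ D, ∀ X : Matrix.SpecialLinearGroup (Fin 3) F,
      (X : Matrix (Fin 3) (Fin 3) F) * C * (X : Matrix (Fin 3) (Fin 3) F)ᵀ ∈ D)
    (hDZ : D ≤ symmMatrices F)
    (h2 : (2:F) = 0) (hsq : ∀ s : F, ∃ t : F, t * t = s)
    {v : F} (hv : v ≠ 0) (hv1 : v ≠ 1)
    (hneZ : D ≠ symmMatrices F) :
    ∀ C ∈ D, ∀ i, C i i = 0 := by
  intro C hC i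
  by_contra hne
  have hsym : Cᵀ = C := hDZ hC
  apply hneZ
  fin_cases i
  · exact fullD hinv hDZ h2 hsq hv hv1 hC hsym hne
  · have hC' := conjMem hinv hC (detP01 h2)
    have hsym' := hDZ hC'
    have ha' : ((!![0,1,0;1,0,0;0,0,1] : Matrix (Fin 3) (Fin 3) F) * C
        * (!![0,1,0;1,0,0;0,0,1] : Matrix (Fin 3) (Fin 3) F)ᵀ) 0 0 ≠ 0 := by
      rw [idP1]; exact hne
    exact fullD hinv hDZ h2 hsq hv hv1 hC' hsym' ha'
  · have hC' := conjMem hinv hC (detP02 h2)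
    have hsym' := hDZ hC'
    have ha' : ((!![0,0,1;0,1,0;1,0,0] : Matrix (Fin 3) (Fin 3) F) * C
        * (!![0,0,1;0,1,0;1,0,0] : Matrix (Fin 3) (Fin 3) F)ᵀ) 0 0 ≠ 0 := by
      rw [idP2]; exact hne
    exact fullD hinv hDZ h2 hsq hv hv1 hC' hsym' ha'

lemma stepE
    (hinv : ∀ C ∈ D, ∀ X : Matrix.SpecialLinearGroup (Fin 3) F,
      (X : Matrix (Fin 3) (Fin 3) F) * C * (X : Matrix (Fin 3) (Fin 3) F)ᵀ ∈ D)
    (hDZ : D ≤ symmMatrices F)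
    (h2 : (2:F) = 0)
    (hdiag : ∀ C ∈ D, ∀ i, C i i = 0)
    {C : Matrix (Fin 3) (Fin 3) F} (hC : C ∈ D) (hb : C 0 1 ≠ 0) :
    D = symmMatricesZeroDiag F := by
  have hsym : Cᵀ = C := hDZ hC
  have h10 := sym10 hsym; have h20 := sym20 hsym; have h21 := sym21 hsym
  have d0 := hdiag C hC 0; have d1 := hdiag C hC 1; have d2 := hdiag C hC 2
  have hF12 : ∀ s : F, (!![(0:F),0,0;0,0,s;0,s,0] : Matrix (Fin 3) (Fin 3) F) ∈ D := by
    intro s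
    have h1 := D.add_mem (conjMem hinv hC (detT20 (s / C 0 1))) hC
    rw [idE1 h2 (s / C 0 1) C h10 h20 h21 d0 d1 d2] at h1
    have he : s / C 0 1 * C 0 1 = s := div_mul_cancel₀ s hb
    rwa [he] at h1
  have hF02 : ∀ s : F, (!![(0:F),0,s;0,0,0;s,0,0] : Matrix (Fin 3) (Fin 3) F) ∈ D := by
    intro s
    have h1 := conjMem hinv (hF12 s) (detP01 h2)
    rwa [idS5 s] at h1
  have hF01 : ∀ s : F, (!![(0:F),s,0;s,0,0;0,0,0] : Matrix (Fin 3) (Fin 3) F) ∈ D := by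
    intro s
    have h1 := conjMem hinv (hF12 s) (detP02 h2)
    rwa [idS4 s] at h1
  apply le_antisymm
  · intro M hM
    exact ⟨hDZ hM, hdiag M hM⟩
  · intro M hM
    obtain ⟨hMsym, hMdiag⟩ := hM
    rw [idD2 M (sym10 hMsym) (sym20 hMsym) (sym21 hMsym) (hMdiag 0) (hMdiag 1) (hMdiag 2)]
    exact D.add_mem (D.add_mem (hF01 _) (hF02 _)) (hF12 _)

end Steps

end Stmt13Aux

open Stmt13Aux in
/-- a nonzero proper `SL₃(F)`-invariant additive subgroup of the group of
symmetric `3 × 3` matrices over `F = 𝔽_q` (`q ≥ 4` even) must be the subgroup of symmetric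
matrices with zero diagonal. -/
theorem stmt_13 (q b : ℕ) (hq2 : q = 2 ^ b) (hq4 : 4 ≤ q)
    (F : Type*) [Field F] [Fintype F] (hcard : Fintype.card F = q)
    (D : AddSubgroup (Matrix (Fin 3) (Fin 3) F)) (hDZ : D ≤ symmMatrices F)
    (hinv : ∀ C ∈ D, ∀ X : Matrix.SpecialLinearGroup (Fin 3) F,
      (X : Matrix (Fin 3) (Fin 3) F) * C * (X : Matrix (Fin 3) (Fin 3) F)ᵀ ∈ D)
    (hne0 : D ≠ ⊥) (hneZ : D ≠ symmMatrices F) :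
    D = symmMatricesZeroDiag F := by
  -- characteristic 2
  have hchar : CharP F (ringChar F) := ringChar.charP F
  obtain ⟨n, hpp, hcard2⟩ := FiniteField.card F (ringChar F)
  have hp2 : ringChar F = 2 := by
    have hdvd : ringChar F ∣ 2 ^ b := by
      rw [← hq2, ← hcard, hcard2]
      exact dvd_pow_self _ n.2.ne'
    have hdvd2 : ringChar F ∣ 2 := hpp.dvd_of_dvd_pow hdvd
    exact (Nat.prime_dvd_prime_iff_eq hpp Nat.prime_two).mp hdvd2
  have h2 : (2 : F) = 0 := by
    haveI : CharP F 2 := hp2 ▸ hchar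
    exact_mod_cast CharP.cast_eq_zero F 2
  -- squaring is surjective
  have hsq : ∀ s : F, ∃ t : F, t * t = s := by
    have hinj : Function.Injective fun x : F => x * x := by
      intro x y hxy
      simp only at hxy
      have h0 : (x + y) * (x + y) = 0 := by linear_combination hxy + (y*y + x*y) * h2
      have h1 := mul_self_eq_zero.mp h0
      linear_combination h1 - y * h2
    intro s
    exact Finite.injective_iff_surjective.mp hinj s
  -- an element distinct from 0 and 1
  obtain ⟨v, hv, hv1⟩ : ∃ v : F, v ≠ 0 ∧ v ≠ 1 := by
    classical
    by_contra h
    push_neg at h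
    have hsub : (Finset.univ : Finset F) ⊆ {0, 1} := by
      intro x _
      rcases eq_or_ne x 0 with h0 | h0
      · simp [h0]
      · simp [h x h0]
    have hle := Finset.card_le_card hsub
    have hle2 : ({0, 1} : Finset F).card ≤ 2 := by
      refine le_trans (Finset.card_insert_le _ _) ?_
      simp
    rw [Finset.card_univ, hcard] at hle
    omega
  -- every element of D has zero diagonal
  have hdiag := allDiagZero hinv hDZ h2 hsq hv hv1 hneZ
  -- pick a nonzero element of D
  obtain ⟨C, hC, hC0⟩ : ∃ C ∈ D, C ≠ 0 := by
    by_contra h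
    push_neg at h
    apply hne0
    ext x
    simp only [AddSubgroup.mem_bot]
    exact ⟨fun hx => h x hx, fun hx => hx ▸ D.zero_mem⟩
  have hsym : Cᵀ = C := hDZ hC
  have h10 := sym10 hsym; have h20 := sym20 hsym; have h21 := sym21 hsym
  have d0 := hdiag C hC 0; have d1 := hdiag C hC 1; have d2 := hdiag C hC 2
  have hoff : C 0 1 ≠ 0 ∨ C 0 2 ≠ 0 ∨ C 1 2 ≠ 0 := by
    by_contra h
    push_neg at h
    obtain ⟨e1, e2, e3⟩ := h
    apply hC0
    ext i j
    fin_cases i <;> fin_cases j <;>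
      simp [e1, e2, e3, h10, h20, h21, d0, d1, d2]
  rcases hoff with hb | hb | hb
  · exact stepE hinv hDZ h2 hdiag hC hb
  · have hC' := conjMem hinv hC (detP12 h2)
    have hb' : ((!![1,0,0;0,0,1;0,1,0] : Matrix (Fin 3) (Fin 3) F) * C
        * (!![1,0,0;0,0,1;0,1,0] : Matrix (Fin 3) (Fin 3) F)ᵀ) 0 1 ≠ 0 := by
      rw [idP3]; exact hb
    exact stepE hinv hDZ h2 hdiag hC' hb'
  · have hC' := conjMem hinv hC (detP02 h2)
    have hb' : ((!![0,0,1;0,1,0;1,0,0] : Matrix (Fin 3) (Fin 3) F) * C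
        * (!![0,0,1;0,1,0;1,0,0] : Matrix (Fin 3) (Fin 3) F)ᵀ) 0 1 ≠ 0 := by
      rw [idP4, h21]; exact hb
    exact stepE hinv hDZ h2 hdiag hC' hb'
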